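/- Let c ∈ ℂ and let C be a real number with C ≥ max(6, √|Re(c)|). Let x, y, z, t ∈ ℂ satisfy P(x,y,z,t) = 2·Re(c), and set z' = z + conj(x·t) − x·y. If |x| ≥ C, |y| ≥ C, |t| > |z| and |z'| > |z|, then |z'| > |x|·|t|·(C−4)/(2C). -/

import Mathlib

/-- The expression `P(x,y,z,t)` from the trace relation. -/
noncomputable def Pfun (x y z t : ℂ) : ℝ :=
  ‖x‖ ^ 2 * ‖y‖ ^ 2 + ‖x‖ ^ 2 + ‖y‖ ^ 2 +
    ‖z‖ ^ 2 + ‖t‖ ^ 2 - 2 * (x * y * (starRingEnd ℂ) z).re -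
    2 * ((starRingEnd ℂ) x * y * t).re - 3

set_option maxHeartbeats 1000000 in
theorem lower_growth_lemma (c : ℂ) (C : ℝ) (hC : max 6 (Real.sqrt |c.re|) ≤ C)
    (x y z t z' : ℂ) (hP : Pfun x y z t = 2 * c.re)
    (hz' : z' = z + (starRingEnd ℂ) (x * t) - x * y)
    (hx : C ≤ ‖x‖) (hy : C ≤ ‖y‖)
    (htz : ‖z‖ < ‖t‖)
    (hz'z : ‖z‖ < ‖z'‖) :
    ‖x‖ * ‖t‖ * ((C - 4) / (2 * C)) < ‖z'‖ := by
  by_contra hcon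
  push_neg at hcon
  set a := ‖x‖ with ha
  set b := ‖y‖ with hb
  set s := ‖z‖ with hs
  set u := ‖t‖ with hu
  set v := ‖z'‖ with hv
  have h6 : (6:ℝ) ≤ C := le_trans (le_max_left _ _) hC
  have hC0 : (0:ℝ) < C := by linarith
  have hsq : Real.sqrt |c.re| ≤ C := le_trans (le_max_right _ _) hC
  have hcre : |c.re| ≤ C ^ 2 := by
    nlinarith [Real.sq_sqrt (abs_nonneg c.re), Real.sqrt_nonneg |c.re|]
  have hcre' : c.re ≤ C ^ 2 := le_trans (le_abs_self _) hcre
  -- nonnegativity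
  have hs0 : 0 ≤ s := norm_nonneg _
  have hu0 : 0 ≤ u := norm_nonneg _
  have ha0 : 0 ≤ a := norm_nonneg _
  have hb0 : 0 ≤ b := norm_nonneg _
  -- bounds on the real parts
  have hre1 : (x * y * (starRingEnd ℂ) z).re ≤ a * b * s := by
    calc (x * y * (starRingEnd ℂ) z).re ≤ ‖x * y * (starRingEnd ℂ) z‖ :=
          Complex.re_le_norm _
      _ = a * b * s := by simp [map_mul, ha, hb, hs]
  have hre2 : ((starRingEnd ℂ) x * y * t).re ≤ a * b * u := by
    calc ((starRingEnd ℂ) x * y * t).re ≤ ‖(starRingEnd ℂ) x * y * t‖ :=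
          Complex.re_le_norm _
      _ = a * b * u := by simp [map_mul, ha, hb, hu]
  have ha2 : C ^ 2 ≤ a ^ 2 := pow_le_pow_left₀ hC0.le hx 2
  have hb2 : C ^ 2 ≤ b ^ 2 := pow_le_pow_left₀ hC0.le hy 2
  -- key inequality from the trace relation
  unfold Pfun at hP
  have hK : a ^ 2 * b ^ 2 + s ^ 2 + u ^ 2 ≤ 2 * (a * b) * s + 2 * (a * b) * u + 3 := by
    linarith
  -- triangle inequality facts
  have hconj : (starRingEnd ℂ) (x * t) = (z' - z) + x * y := by rw [hz']; ring
  have h1 : a * u ≤ v + s + a * b := by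
    have t1 : ‖z' - z‖ ≤ v + s := by
      simpa [sub_eq_add_neg] using norm_add_le z' (-z)
    calc a * u = ‖(starRingEnd ℂ) (x * t)‖ := by simp [map_mul, ha, hu]
      _ = ‖(z' - z) + x * y‖ := by rw [hconj]
      _ ≤ ‖z' - z‖ + ‖x * y‖ := norm_add_le _ _
      _ ≤ (v + s) + a * b := by
          have : ‖x * y‖ = a * b := by simp [map_mul, ha, hb]
          linarith [t1, this.le]
  have h3 : a * u < 2 * (a * u * ((C - 4) / (2 * C))) + a * b := by
    have : v + s < 2 * (a * u * ((C - 4) / (2 * C))) := by linarith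
    linarith
  have h4 : 4 * (a * u) < C * (a * b) := by
    have hMeq : C * (2 * (a * u * ((C - 4) / (2 * C)))) = a * u * (C - 4) := by
      field_simp
    have h5 : C * (a * u) < a * u * (C - 4) + C * (a * b) := by
      calc C * (a * u) < C * (2 * (a * u * ((C - 4) / (2 * C))) + a * b) :=
            mul_lt_mul_of_pos_left h3 hC0
        _ = a * u * (C - 4) + C * (a * b) := by rw [mul_add, hMeq]
    linarith [h5]
  have hu4 : 4 * u < a * b := by
    have h7 : C * (4 * u) ≤ 4 * (a * u) := by
      have := mul_le_mul_of_nonneg_right hx hu0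
      nlinarith [this]
    have h8 : C * (4 * u) < C * (a * b) := lt_of_le_of_lt h7 h4
    exact (mul_lt_mul_iff_right₀ hC0).mp h8
  have h36 : 36 ≤ a * b := by
    have hcc : C * C ≤ a * b := mul_le_mul hx hy hC0.le ha0
    nlinarith [hcc, h6]
  have hsu : s < u := htz
  have p1 : 0 ≤ a * b - 4 * s := by linarith
  have p2 : 0 ≤ 7 * (a * b) - 4 * s := by linarith
  have q1 : 0 ≤ a * b - 4 * u := by linarith
  have q2 : 0 ≤ 7 * (a * b) - 4 * u := by linarith
  nlinarith [hK, h36, mul_nonneg p1 p2, mul_nonneg q1 q2]
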